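/- Let x : ℝ → ℝ^(N+1) be continuously differentiable solving x'(t) = B(t) x(t), where B(t) has nonnegative off-diagonal entries and the map t ↦ B(t) is continuous. If x(s) ≥ 0 componentwise, then for all t ≥ s, ‖x(t)‖₁ ≥ exp(∫_s^t min_j Σ_i b_ij(τ) dτ) · ‖x(s)‖₁. -/

import Mathlib

open Real Filter Matrix

lemma mono_aux {a b : ℝ} {g g' : ℝ → ℝ} (hab : a ≤ b)
    (hg : ∀ u, HasDerivAt g (g' u) u) (hg' : ∀ u ∈ Set.Ioo a b, 0 ≤ g' u) :
    g a ≤ g b := by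
  have := monotoneOn_of_deriv_nonneg (convex_Icc a b)
    (fun u _ => (hg u).continuousAt.continuousWithinAt)
    (fun u hu => ((hg u).differentiableAt).differentiableWithinAt)
    (fun u hu => by
      rw [(hg u).deriv]
      exact hg' u (by rwa [interior_Icc] at hu))
  exact this (Set.left_mem_Icc.2 hab) (Set.right_mem_Icc.2 hab) hab

lemma pos_aux {N : ℕ}
    (B : ℝ → Matrix (Fin (N+1)) (Fin (N+1)) ℝ)
    (hBcont : Continuous B)
    (hoffdiag : ∀ t, ∀ i j, i ≠ j → 0 ≤ B t i j)
    (x : ℝ → Fin (N+1) → ℝ)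
    (hx : ∀ t, HasDerivAt x (B t *ᵥ x t) t)
    (s : ℝ) (hxs : ∀ i, 0 ≤ x s i) :
    ∀ t, s ≤ t → ∀ i, 0 ≤ x t i := by
  intro T hT i₀
  have hentry : ∀ i j, Continuous fun τ => B τ i j :=
    fun i j => (continuous_apply j).comp ((continuous_apply i).comp hBcont)
  have hxc : ∀ i, Continuous fun τ => x τ i := by
    intro i
    have : Continuous x := by
      apply continuous_iff_continuousAt.2
      exact fun u => (hx u).continuousAt
    exact (continuous_apply i).comp this
  have hxder : ∀ u i, HasDerivAt (fun τ => x τ i) ((B u *ᵥ x u) i) u :=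
    fun u i => hasDerivAt_pi.1 (hx u) i
  -- bound K
  set F : ℝ → ℝ := fun t => ∑ i, ∑ j, |B t i j| with hF
  have hFc : Continuous F := by
    apply continuous_finset_sum _ fun i _ => continuous_finset_sum _ fun j _ => (hentry i j).abs
  obtain ⟨tK, htK, hK⟩ := isCompact_Icc.exists_isMaxOn (Set.nonempty_Icc.2 hT) hFc.continuousOn
  set K := F tK with hKdef
  have hKbound : ∀ u ∈ Set.Icc s T, ∀ i, ∑ j, B u i j ≤ K := by
    intro u hu i
    calc ∑ j, B u i j ≤ ∑ j, |B u i j| := Finset.sum_le_sum fun j _ => le_abs_self _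
    _ ≤ F u := Finset.single_le_sum (f := fun i => ∑ j, |B u i j|)
        (fun i _ => Finset.sum_nonneg fun j _ => abs_nonneg _) (Finset.mem_univ i)
    _ ≤ K := hK hu
  clear_value K
  -- main claim
  have main : ∀ ε > 0, ∀ t ∈ Set.Icc s T, ∀ i, 0 < x t i + ε * Real.exp (K*(t-s)) := by
    intro ε hε
    by_contra hcon
    push_neg at hcon
    set y : ℝ → Fin (N+1) → ℝ := fun t i => x t i + ε * Real.exp (K*(t-s)) with hy
    set U : Set ℝ := Set.Icc s T ∩ (⋃ i, {t | y t i ≤ 0}) with hU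
    have hyc : ∀ i, Continuous fun t => y t i := by
      intro i
      exact (hxc i).add (continuous_const.mul ((continuous_const.mul (continuous_id.sub continuous_const)).rexp))
    have hUclosed : IsClosed U :=
      isClosed_Icc.inter (isClosed_iUnion_of_finite fun i => isClosed_le (hyc i) continuous_const)
    have hUne : U.Nonempty := by
      obtain ⟨t, ht, i, hi⟩ := hcon
      exact ⟨t, ht, Set.mem_iUnion.2 ⟨i, hi⟩⟩
    have hUbdd : BddBelow U := ⟨s, fun u hu => hu.1.1⟩
    set c := sInf U with hc
    have hcU : c ∈ U := hUclosed.csInf_mem hUne hUbdd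
    obtain ⟨hcIcc, hmem⟩ := hcU
    obtain ⟨i, hyi⟩ : ∃ i, y c i ≤ 0 := by simpa using hmem
    have hys : ∀ j, 0 < y s j := by
      intro j
      simp only [hy, sub_self, mul_zero, Real.exp_zero, mul_one]
      exact add_pos_of_nonneg_of_pos (hxs j) hε
    have hsc : s < c := by
      rcases lt_or_eq_of_le hcIcc.1 with h | h
      · exact h
      · exact absurd hyi (by rw [← h]; exact not_le.2 (hys i))
    have hypos : ∀ u ∈ Set.Ico s c, ∀ j, 0 < y u j := by
      intro u hu j
      by_contra hneg
      push_neg at hneg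
      have : u ∈ U := ⟨⟨hu.1, hu.2.le.trans hcIcc.2⟩, Set.mem_iUnion.2 ⟨j, hneg⟩⟩
      exact absurd (csInf_le hUbdd this) (not_le.2 hu.2)
    -- derivative argument
    set I : ℝ → ℝ := fun u => ∫ τ in s..u, B τ i i with hI
    have hIder : ∀ u, HasDerivAt I (B u i i) u :=
      fun u => ((hentry i i).integral_hasStrictDerivAt s u).hasDerivAt
    set g : ℝ → ℝ := fun u => y u i * Real.exp (-(I u)) with hg
    set e : ℝ → ℝ := fun u => Real.exp (K*(u-s)) with he
    have hyder : ∀ u, HasDerivAt (fun τ => y τ i) ((B u *ᵥ x u) i + ε * (e u * K)) u := by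
      intro u
      have h0 := (hxder u i).add (((((hasDerivAt_id' (x := u))).sub_const s).const_mul K).exp.const_mul ε)
      exact h0.congr_deriv (by simp [he])
    have hgder : ∀ u, HasDerivAt g
        (((B u *ᵥ x u) i + ε * (e u * K)) * Real.exp (-(I u))
          + y u i * (Real.exp (-(I u)) * -(B u i i))) u :=
      fun u => (hyder u).mul ((hIder u).neg.exp)
    have hmono := mono_aux (g := g) hsc.le hgder ?_
    · have h1 : g s = y s i := by
        simp [hg, hI, intervalIntegral.integral_same]
      have h2 : g c ≤ 0 := mul_nonpos_of_nonpos_of_nonneg hyi (Real.exp_pos _).le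
      rw [h1] at hmono
      exact absurd (hmono.trans h2) (not_le.2 (hys i))
    · intro u hu
      have huIcc : u ∈ Set.Icc s T := ⟨hu.1.le, hu.2.le.trans hcIcc.2⟩
      have hykey : ∀ j, 0 < y u j := hypos u ⟨hu.1.le, hu.2⟩
      have key : (B u *ᵥ x u) i + ε * (e u * K) - B u i i * y u i
          = (∑ j ∈ Finset.univ.erase i, B u i j * y u j) + ε * e u * (K - ∑ j, B u i j) := by
        have hxy : ∀ j, x u j = y u j - ε * e u := by intro j; simp [hy, he]
        have e1 : (B u *ᵥ x u) i = ∑ j, B u i j * (y u j - ε * e u) := by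
          simp only [Matrix.mulVec, dotProduct]
          exact Finset.sum_congr rfl fun j _ => by rw [hxy j]
        have e2 : ∑ j, B u i j * (y u j - ε * e u)
            = ((∑ j ∈ Finset.univ.erase i, B u i j * y u j) + B u i i * y u i)
              - (ε * e u) * ∑ j, B u i j := by
          simp only [mul_sub, Finset.sum_sub_distrib,
            Finset.sum_erase_add _ (fun j => B u i j * y u j) (Finset.mem_univ i)]
          rw [← Finset.sum_mul]; ring
        rw [e1, e2, ← Finset.sum_erase_add _ (fun j => B u i j) (Finset.mem_univ i)]
        ring
      have hkey2 : 0 ≤ (B u *ᵥ x u) i + ε * (e u * K) - B u i i * y u i := by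
        rw [key]
        apply add_nonneg
        · exact Finset.sum_nonneg fun j hj =>
            mul_nonneg (hoffdiag u i j (Finset.ne_of_mem_erase hj).symm) (hykey j).le
        · exact mul_nonneg (mul_nonneg hε.le (Real.exp_pos _).le)
            (sub_nonneg.2 (hKbound u huIcc i))
      have : ((B u *ᵥ x u) i + ε * (e u * K)) * Real.exp (-(I u))
          + y u i * (Real.exp (-(I u)) * -(B u i i))
          = ((B u *ᵥ x u) i + ε * (e u * K) - B u i i * y u i) * Real.exp (-(I u)) := by ring
      rw [this]
      exact mul_nonneg hkey2 (Real.exp_pos _).le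
  -- conclude
  by_contra hneg
  push_neg at hneg
  have hC : (0:ℝ) < Real.exp (K*(T-s)) := Real.exp_pos _
  have hd : (0:ℝ) < -x T i₀ / (2 * Real.exp (K*(T-s))) := div_pos (by linarith) (by positivity)
  have := main _ hd T ⟨hT, le_refl T⟩ i₀
  have hcalc : -x T i₀ / (2 * Real.exp (K*(T-s))) * Real.exp (K*(T-s)) = -x T i₀ / 2 := by
    field_simp
  rw [hcalc] at this
  linarith

/-- Lower bound for solutions of x' = B(t)x with nonnegative off-diagonal B(t)
    and nonnegative initial value: ‖x(t)‖₁ ≥ exp(∫_s^t min_j ∑_i b_ij(τ) dτ)·‖x(s)‖₁. -/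
theorem l1_lower_bound_nonneg_offdiag {N : ℕ}
    (B : ℝ → Matrix (Fin (N+1)) (Fin (N+1)) ℝ)
    (hBcont : Continuous B)
    (hoffdiag : ∀ t, ∀ i j, i ≠ j → 0 ≤ B t i j)
    (x : ℝ → Fin (N+1) → ℝ)
    (hx : ∀ t, HasDerivAt x (B t *ᵥ x t) t)
    (s : ℝ) (hxs : ∀ i, 0 ≤ x s i) :
    ∀ t, s ≤ t →
      Real.exp (∫ τ in s..t, ⨅ j, ∑ i, B τ i j) * (∑ i, |x s i|)
        ≤ ∑ i, |x t i| := by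
  intro t hst
  have hpos := pos_aux B hBcont hoffdiag x hx s hxs
  have hentry : ∀ i j, Continuous fun τ => B τ i j :=
    fun i j => (continuous_apply j).comp ((continuous_apply i).comp hBcont)
  have hxder : ∀ u i, HasDerivAt (fun τ => x τ i) ((B u *ᵥ x u) i) u :=
    fun u i => hasDerivAt_pi.1 (hx u) i
  set m : ℝ → ℝ := fun τ => ⨅ j, ∑ i, B τ i j with hm
  have hmc : Continuous m := by
    have h : ∀ (τ:ℝ), m τ = Finset.univ.inf' Finset.univ_nonempty (fun j => ∑ i, B τ i j) := by
      intro τ; rw [hm, Finset.inf'_univ_eq_ciInf]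
    simp only [funext h]
    exact continuous_iff_continuousAt.2 fun u =>
      ContinuousAt.finset_inf'_apply Finset.univ_nonempty (fun i _ =>
        (continuous_finset_sum _ (fun j _ => hentry j i)).continuousAt)
  set I : ℝ → ℝ := fun u => ∫ τ in s..u, m τ with hI
  have hIder : ∀ u, HasDerivAt I (m u) u :=
    fun u => (hmc.integral_hasStrictDerivAt s u).hasDerivAt
  set S : ℝ → ℝ := fun u => ∑ i, x u i with hS
  have hSder : ∀ u, HasDerivAt S (∑ i, (B u *ᵥ x u) i) u :=
    fun u => HasDerivAt.fun_sum fun i _ => hxder u i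
  set G : ℝ → ℝ := fun u => S u * Real.exp (-(I u)) with hG
  have hGder : ∀ u, HasDerivAt G
      ((∑ i, (B u *ᵥ x u) i) * Real.exp (-(I u)) + S u * (Real.exp (-(I u)) * -(m u))) u :=
    fun u => (hSder u).mul ((hIder u).neg.exp)
  have hmono := mono_aux (g := G) hst hGder ?_
  · have h1 : G s = S s := by simp [hG, hI, intervalIntegral.integral_same]
    rw [h1] at hmono
    have h2 : ∀ i, |x s i| = x s i := fun i => abs_of_nonneg (hxs i)
    have h3 : ∀ i, |x t i| = x t i := fun i => abs_of_nonneg (hpos t hst i)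
    simp only [h2, h3]
    have hexp : (0:ℝ) < Real.exp (-(I t)) := Real.exp_pos _
    have : Real.exp (∫ τ in s..t, m τ) * S s ≤ Real.exp (I t) * G t := by
      rw [hI]
      exact mul_le_mul_of_nonneg_left hmono (Real.exp_pos _).le
    calc Real.exp (∫ τ in s..t, ⨅ j, ∑ i, B τ i j) * ∑ i, x s i
        ≤ Real.exp (I t) * G t := this
      _ = S t := by
          show Real.exp (I t) * (S t * Real.exp (-(I t))) = S t
          rw [mul_comm (S t), ← mul_assoc, ← Real.exp_add]
          simp
  · intro u hu
    have hxu : ∀ j, 0 ≤ x u j := hpos u hu.1.le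
    have hkey : m u * S u ≤ ∑ i, (B u *ᵥ x u) i := by
      have : ∑ i, (B u *ᵥ x u) i = ∑ j, (∑ i, B u i j) * x u j := by
        simp only [Matrix.mulVec, dotProduct]
        rw [Finset.sum_comm]
        exact Finset.sum_congr rfl fun j _ => by rw [Finset.sum_mul]
      rw [this, hS, Finset.mul_sum]
      apply Finset.sum_le_sum
      intro j _
      apply mul_le_mul_of_nonneg_right _ (hxu j)
      exact ciInf_le (Set.Finite.bddBelow (Set.finite_range _)) j
    have : (∑ i, (B u *ᵥ x u) i) * Real.exp (-(I u)) + S u * (Real.exp (-(I u)) * -(m u))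
        = ((∑ i, (B u *ᵥ x u) i) - m u * S u) * Real.exp (-(I u)) := by ring
    rw [this]
    exact mul_nonneg (by linarith) (Real.exp_pos _).le
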